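/- Let F, F' ∈ ℝ² and A ∈ ℝ with 2A > dist(F,F'), and let P satisfy dist(P,F) + dist(P,F') = 2A (P lies on the ellipse with foci F, F' and semi-major axis A). Then P ≠ F, P ≠ F', the vector n = (P−F)/‖P−F‖ + (P−F')/‖P−F'‖ is nonzero, and, letting l be the line through P perpendicular to n (the tangent line of the ellipse at P) and F_P the reflection of F across l, one has F_P = F' + (2A/dist(P,F'))·(P − F'). In particular dist(F', F_P) = 2A and F_P lies on the ray from F' through P (the optical property of the ellipse used in the construction of consecutive foci). -/

import Mathlib

open RealInnerProductSpace

/-- The line through `P` perpendicular to the vector `n` (for `n ≠ 0` this is the tangent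
line at `P` of an ellipse with normal vector `n` at `P`). -/
noncomputable def perpLineAt (P n : EuclideanSpace ℝ (Fin 2)) :
    AffineSubspace ℝ (EuclideanSpace ℝ (Fin 2)) :=
  AffineSubspace.mk' P (ℝ ∙ n)ᗮ

instance (P n : EuclideanSpace ℝ (Fin 2)) : Nonempty (perpLineAt P n) :=
  (AffineSubspace.mk'_nonempty P (ℝ ∙ n)ᗮ).to_subtype

/-- **Optical property of the ellipse.** If `P` lies on the ellipse with foci `F, F'` and
semi-major axis `A` (with `2A > dist F F'`), then `P ≠ F`, `P ≠ F'`, the normal vector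
`n = (P−F)/‖P−F‖ + (P−F')/‖P−F'‖` is nonzero, and the reflection `F_P` of `F` across the
tangent line of the ellipse at `P` (the line through `P` perpendicular to `n`) is
`F' + (2A / dist P F') • (P − F')`; in particular `dist F' F_P = 2A` and `F_P` lies on the
ray from `F'` through `P`. -/
theorem optical_property_ellipse
    (F F' P : EuclideanSpace ℝ (Fin 2)) (A : ℝ)
    (hA : 2 * A > dist F F') (hP : dist P F + dist P F' = 2 * A)
    (n : EuclideanSpace ℝ (Fin 2))
    (hn : n = ‖P - F‖⁻¹ • (P - F) + ‖P - F'‖⁻¹ • (P - F')) :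
    P ≠ F ∧ P ≠ F' ∧ n ≠ 0 ∧
    EuclideanGeometry.reflection (perpLineAt P n) F
      = F' + (2 * A / dist P F') • (P - F') ∧
    dist F' (EuclideanGeometry.reflection (perpLineAt P n) F) = 2 * A := by
  have hA0 : 0 < 2 * A := lt_of_le_of_lt dist_nonneg hA
  have hPF : P ≠ F := by
    rintro rfl
    rw [dist_self, zero_add] at hP
    rw [hP] at hA
    exact lt_irrefl _ hA
  have hPF' : P ≠ F' := by
    rintro rfl
    rw [dist_self, add_zero, dist_comm] at hP
    rw [hP] at hA
    exact lt_irrefl _ hA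
  have hr : 0 < ‖P - F‖ := by rwa [norm_sub_pos_iff]
  have hr' : 0 < ‖P - F'‖ := by rwa [norm_sub_pos_iff]
  have hdF : dist P F = ‖P - F‖ := dist_eq_norm _ _
  have hdF' : dist P F' = ‖P - F'‖ := dist_eq_norm _ _
  have h2A : 2 * A = ‖P - F‖ + ‖P - F'‖ := by rw [← hP, hdF, hdF']
  have hnne : n ≠ 0 := by
    intro h0
    have e0 : ‖P - F‖⁻¹ • (P - F) = -(‖P - F'‖⁻¹ • (P - F')) :=
      eq_neg_of_add_eq_zero_left (hn.symm.trans h0)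
    have e1 : P - F = -((‖P - F‖ * ‖P - F'‖⁻¹) • (P - F')) := by
      calc P - F = ‖P - F‖ • (‖P - F‖⁻¹ • (P - F)) := by
            rw [smul_smul, mul_inv_cancel₀ hr.ne', one_smul]
        _ = ‖P - F‖ • -(‖P - F'‖⁻¹ • (P - F')) := by rw [e0]
        _ = -((‖P - F‖ * ‖P - F'‖⁻¹) • (P - F')) := by rw [smul_neg, smul_smul]
    have key : F - F' = (1 + ‖P - F‖ * ‖P - F'‖⁻¹) • (P - F') := by
      have h2 : F - F' = (P - F') - (P - F) := by abel
      conv_lhs => rw [h2, e1]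
      module
    have hk : (0:ℝ) < 1 + ‖P - F‖ * ‖P - F'‖⁻¹ := by positivity
    have hd : dist F F' = (1 + ‖P - F‖ * ‖P - F'‖⁻¹) * ‖P - F'‖ := by
      rw [dist_eq_norm, key, norm_smul, Real.norm_eq_abs, abs_of_pos hk]
    have he : (1 + ‖P - F‖ * ‖P - F'‖⁻¹) * ‖P - F'‖ = ‖P - F'‖ + ‖P - F‖ := by
      field_simp
    rw [hd, he, h2A] at hA
    linarith
  set Q : EuclideanSpace ℝ (Fin 2) := F + (‖P - F‖ / 2) • n with hQdef
  have ha : ⟪P - F, P - F⟫ = ‖P - F‖ * ‖P - F‖ := real_inner_self_eq_norm_mul_norm _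
  have hb : ⟪P - F', P - F'⟫ = ‖P - F'‖ * ‖P - F'‖ := real_inner_self_eq_norm_mul_norm _
  have hab : ⟪P - F', P - F⟫ = ⟪P - F, P - F'⟫ := real_inner_comm _ _
  have hQmem : Q ∈ perpLineAt P n := by
    rw [perpLineAt, AffineSubspace.mem_mk',
      Submodule.mem_orthogonal_singleton_iff_inner_right]
    have hv : Q -ᵥ P = -(P - F) + (‖P - F‖ / 2) • n := by
      simp only [hQdef, vsub_eq_sub]
      abel
    rw [hv, hn]
    simp only [inner_add_left, inner_add_right, inner_neg_right, real_inner_smul_left,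
      real_inner_smul_right]
    rw [ha, hb, hab]
    field_simp
    ring
  have hQmem' : Q ∈ AffineSubspace.mk' F (perpLineAt P n).directionᗮ := by
    rw [AffineSubspace.mem_mk']
    have hdir : (perpLineAt P n).direction = (ℝ ∙ n)ᗮ := AffineSubspace.direction_mk' _ _
    rw [hdir, Submodule.orthogonal_orthogonal]
    have : Q -ᵥ F = (‖P - F‖ / 2) • n := by
      simp only [hQdef, vsub_eq_sub]
      abel
    rw [this]
    exact Submodule.smul_mem _ _ (Submodule.mem_span_singleton_self n)
  have hproj : (EuclideanGeometry.orthogonalProjection (perpLineAt P n) F :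
      EuclideanSpace ℝ (Fin 2)) = Q := by
    have hi := EuclideanGeometry.inter_eq_singleton_orthogonalProjection (s := perpLineAt P n) F
    have hQ : Q ∈ ((perpLineAt P n : Set (EuclideanSpace ℝ (Fin 2))) ∩
        AffineSubspace.mk' F (perpLineAt P n).directionᗮ) := ⟨hQmem, hQmem'⟩
    rw [hi, Set.mem_singleton_iff] at hQ
    exact hQ.symm
  have hrefl : EuclideanGeometry.reflection (perpLineAt P n) F
      = F' + (2 * A / dist P F') • (P - F') := by
    rw [EuclideanGeometry.reflection_apply', hproj]
    rw [hdF', h2A]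
    simp only [hQdef, vsub_eq_sub, vadd_eq_add, hn]
    match_scalars <;> field_simp <;> ring
  refine ⟨hPF, hPF', hnne, hrefl, ?_⟩
  rw [hrefl, dist_eq_norm]
  have : F' - (F' + (2 * A / dist P F') • (P - F')) = -((2 * A / dist P F') • (P - F')) := by
    abel
  rw [this, norm_neg, norm_smul, Real.norm_eq_abs, hdF',
    abs_of_nonneg (by positivity : (0:ℝ) ≤ 2 * A / ‖P - F'‖), div_mul_cancel₀ _ hr'.ne']
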